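/- The integral ∫_0^{π/2} θ/sin θ dθ equals 2G, where G = Σ_{n=0}^∞ (-1)^n/(2n+1)^2 is Catalan's constant. -/

import Mathlib

open Real MeasureTheory Set intervalIntegral

lemma g_meas : Measurable (fun θ : ℝ => θ / Real.sin θ) :=
  measurable_id.div Real.measurable_sin

lemma jordan_bound {θ : ℝ} (h1 : 0 < θ) (h2 : θ ≤ π / 2) :
    ‖θ / Real.sin θ‖ ≤ π / 2 := by
  have hs : 2 / π * θ ≤ Real.sin θ := Real.mul_le_sin h1.le h2
  have hπ : (0:ℝ) < π := Real.pi_pos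
  have hs0 : 0 < Real.sin θ := lt_of_lt_of_le (by positivity) hs
  rw [Real.norm_of_nonneg (by positivity)]
  rw [div_le_iff₀ hs0]
  calc θ = (π/2) * (2/π * θ) := by field_simp
  _ ≤ π/2 * Real.sin θ := by nlinarith

lemma g_int : IntegrableOn (fun θ : ℝ => θ / Real.sin θ) (Icc 0 (π/2)) := by
  rw [integrableOn_Icc_iff_integrableOn_Ioc]
  apply Measure.integrableOn_of_bounded (M := π/2)
  · simp
  · exact g_meas.aestronglyMeasurable
  · filter_upwards [ae_restrict_mem measurableSet_Ioc] with θ hθ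
    exact jordan_bound hθ.1 hθ.2

lemma sin_two_arctan (t : ℝ) : Real.sin (2 * Real.arctan t) = 2 * t / (1 + t ^ 2) := by
  rw [Real.sin_two_mul, Real.sin_arctan, Real.cos_arctan]
  have h : (0:ℝ) < 1 + t ^ 2 := by positivity
  have hsq : Real.sqrt (1 + t ^ 2) * Real.sqrt (1 + t ^ 2) = 1 + t ^ 2 :=
    Real.mul_self_sqrt h.le
  have hne : Real.sqrt (1 + t ^ 2) ≠ 0 := by positivity
  field_simp
  rw [Real.sq_sqrt h.le]

lemma arctan_nonneg' {x : ℝ} (h : 0 ≤ x) : 0 ≤ Real.arctan x := by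
  rw [← Real.arctan_zero]; exact Real.arctan_strictMono.monotone h

lemma arctan_pos' {x : ℝ} (h : 0 < x) : 0 < Real.arctan x := by
  rw [← Real.arctan_zero]; exact Real.arctan_strictMono h

lemma step1 : ∫ θ in (0:ℝ)..(π/2), θ / Real.sin θ =
    ∫ t in (0:ℝ)..1, 2 * (Real.arctan t / t) := by
  have hf : ContinuousOn (fun t : ℝ => 2 * Real.arctan t) (uIcc 0 1) :=
    (continuous_const.mul Real.continuous_arctan).continuousOn
  have himg : ∀ t ∈ Icc (0:ℝ) 1, 2 * Real.arctan t ∈ Icc 0 (π/2) := by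
    intro t ht
    constructor
    · have := arctan_nonneg' ht.1
      linarith
    · have : Real.arctan t ≤ Real.arctan 1 := Real.arctan_strictMono.monotone ht.2
      rw [Real.arctan_one] at this
      linarith
  have key := intervalIntegral.integral_comp_smul_deriv''' (a := 0) (b := 1)
      (f := fun t => 2 * Real.arctan t) (f' := fun t => 2 / (1 + t ^ 2))
      (g := fun θ => θ / Real.sin θ) hf ?_ ?_ ?_ ?_
  · have e0 : (fun t : ℝ => 2 * Real.arctan t) 0 = 0 := by simp
    have e1 : (fun t : ℝ => 2 * Real.arctan t) 1 = π/2 := by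
      simp only [Real.arctan_one]; ring
    rw [show (2:ℝ) * Real.arctan 0 = 0 from e0, show (2:ℝ) * Real.arctan 1 = π/2 from e1] at key
    rw [← key]
    apply intervalIntegral.integral_congr_ae
    have h0 : ∀ᵐ t : ℝ, t ∉ ({0} : Set ℝ) :=
      (Set.countable_singleton (0:ℝ)).ae_notMem volume
    filter_upwards [h0] with t ht' _
    have ht : t ≠ 0 := by simpa using ht'
    have harct : Real.arctan t ≠ 0 := fun h => ht (Real.arctan_injective (by simpa using h))
    have h2a : 2 * Real.arctan t ≠ 0 := by
      intro h; exact harct (by linarith [h])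
    have hden : (1:ℝ) + t ^ 2 ≠ 0 := by positivity
    simp only [smul_eq_mul, Function.comp_apply, sin_two_arctan]
    field_simp
  · intro x hx
    have := ((Real.hasDerivAt_arctan x).const_mul 2).hasDerivWithinAt (s := Ioi x)
    refine this.congr_deriv ?_
    ring
  · apply ContinuousOn.mono (s := Ioo 0 π)
    · exact continuousOn_id.div Real.continuous_sin.continuousOn
        (fun θ hθ => ne_of_gt (Real.sin_pos_of_pos_of_lt_pi hθ.1 hθ.2))
    · rintro y ⟨t, ht, rfl⟩
      norm_num [Set.mem_Ioo] at ht
      have h1 : 0 < Real.arctan t := arctan_pos' ht.1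
      have h2 : Real.arctan t < π/2 := Real.arctan_lt_pi_div_two t
      show 2 * Real.arctan t ∈ Ioo 0 π
      constructor <;> [linarith; linarith [Real.pi_pos]]
  · apply g_int.mono_set
    rintro y ⟨t, ht, rfl⟩
    rw [uIcc_of_le zero_le_one] at ht
    exact himg t ht
  · apply Measure.integrableOn_of_bounded (M := 2 * (π/2))
    · rw [uIcc_of_le zero_le_one]; simp
    · apply Measurable.aestronglyMeasurable
      apply Measurable.mul (f := fun x : ℝ => 2 / (1 + x ^ 2))
        (g := (fun θ => θ / Real.sin θ) ∘ fun t => 2 * Real.arctan t)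
      · exact (measurable_const.div ((measurable_id.pow_const 2).const_add 1))
      · exact g_meas.comp (Real.measurable_arctan.const_mul 2)
    · filter_upwards [ae_restrict_mem (by rw [uIcc_of_le zero_le_one]; exact measurableSet_Icc)]
        with t ht
      rw [uIcc_of_le zero_le_one] at ht
      have hden : (0:ℝ) < 1 + t ^ 2 := by positivity
      have hb1 : ‖(2:ℝ) / (1 + t ^ 2)‖ ≤ 2 := by
        rw [Real.norm_of_nonneg (by positivity), div_le_iff₀ hden]
        nlinarith [sq_nonneg t]
      have hb2 : ‖(fun θ => θ / Real.sin θ) (2 * Real.arctan t)‖ ≤ π/2 := by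
        rcases eq_or_lt_of_le (arctan_nonneg' ht.1) with h | h
        · show ‖2 * Real.arctan t / Real.sin (2 * Real.arctan t)‖ ≤ π/2
          rw [← h]
          simp
          positivity
        · exact jordan_bound (by linarith) (himg t ht).2
      calc ‖(2 / (1 + t ^ 2)) • ((fun θ => θ / Real.sin θ) ∘ fun t => 2 * Real.arctan t) t‖
          = ‖(2:ℝ) / (1 + t ^ 2)‖ * ‖(fun θ => θ / Real.sin θ) (2 * Real.arctan t)‖ := by
            simp [norm_smul, Function.comp]
        _ ≤ 2 * (π/2) := by
            apply mul_le_mul hb1 hb2 (norm_nonneg _) (by norm_num)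

lemma summable_inv_sq : Summable (fun n : ℕ => 1 / (2*(n:ℝ)+1)^2) := by
  have h1 : Summable (fun n : ℕ => 1 / ((n:ℝ)+1)^2) := by
    have := (summable_nat_add_iff (f := fun n : ℕ => 1 / (n:ℝ)^2) 1).mpr
      (Real.summable_one_div_nat_pow.mpr one_lt_two)
    simpa using this
  refine Summable.of_nonneg_of_le (fun n => by positivity) (fun n => ?_) h1
  apply one_div_le_one_div_of_le (by positivity)
  nlinarith [Nat.cast_nonneg (α := ℝ) n]

lemma step2 : ∫ t in (0:ℝ)..1, Real.arctan t / t =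
    ∑' n : ℕ, (-1:ℝ)^n / (2*(n:ℝ)+1)^2 := by
  set F : ℕ → ℝ → ℝ := fun n t => (-1:ℝ)^n * t^(2*n) / (2*(n:ℝ)+1) with hF
  have hcont : ∀ n, Continuous (F n) := fun n =>
    ((continuous_const.mul (continuous_pow _)).div_const _)
  have hint : ∀ n, IntegrableOn (F n) (Ioc 0 1) := fun n =>
    ((hcont n).integrableOn_Icc).mono_set Ioc_subset_Icc_self
  have hval : ∀ n : ℕ, ∫ t in Ioc (0:ℝ) 1, F n t = (-1:ℝ)^n / (2*(n:ℝ)+1)^2 := by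
    intro n
    rw [← intervalIntegral.integral_of_le zero_le_one]
    simp only [hF]
    rw [show (fun t : ℝ => (-1:ℝ)^n * t^(2*n) / (2*(n:ℝ)+1)) =
        (fun t : ℝ => ((-1:ℝ)^n / (2*(n:ℝ)+1)) * t^(2*n)) by funext t; ring]
    rw [intervalIntegral.integral_const_mul, integral_pow]
    push_cast
    field_simp
    ring
  have hnorm : ∀ n : ℕ, ∫ t in Ioc (0:ℝ) 1, ‖F n t‖ = 1 / (2*(n:ℝ)+1)^2 := by
    intro n
    have hpos : (0:ℝ) < 2*(n:ℝ)+1 := by positivity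
    rw [setIntegral_congr_fun measurableSet_Ioc
      (g := fun t : ℝ => 1 * t^(2*n) / (2*(n:ℝ)+1))]
    · rw [← intervalIntegral.integral_of_le zero_le_one]
      rw [show (fun t : ℝ => (1:ℝ) * t^(2*n) / (2*(n:ℝ)+1)) =
          (fun t : ℝ => ((1:ℝ) / (2*(n:ℝ)+1)) * t^(2*n)) by funext t; ring]
      rw [intervalIntegral.integral_const_mul, integral_pow]
      push_cast
      field_simp
      ring
    · intro t ht
      simp only [hF, Real.norm_eq_abs, abs_div, abs_mul, abs_pow, abs_neg, abs_one,
        one_pow, one_mul]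
      rw [abs_of_pos ht.1, abs_of_pos hpos]
  have hsumnorm : Summable fun n : ℕ => ∫ t in Ioc (0:ℝ) 1, ‖F n t‖ := by
    simp_rw [hnorm]; exact summable_inv_sq
  have swap := integral_tsum_of_summable_integral_norm
    (μ := volume.restrict (Ioc (0:ℝ) 1)) hint hsumnorm
  have hsum_eq : ∀ t ∈ Ioo (0:ℝ) 1, Real.arctan t / t = (∑' n, F n t) := by
    intro t ht
    have h1 : ‖t‖ < 1 := by rw [Real.norm_eq_abs, abs_of_pos ht.1]; exact ht.2
    have h2 := (Real.hasSum_arctan h1).div_const t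
    have h3 : (fun n : ℕ => (-1:ℝ)^n * t^(2*n+1)/((2*n+1 : ℕ):ℝ)/t) = fun n => F n t := by
      funext n
      rw [hF]
      have ht0 : t ≠ 0 := ne_of_gt ht.1
      push_cast
      rw [pow_succ]
      field_simp
    rw [← h2.tsum_eq, h3]
  rw [intervalIntegral.integral_of_le zero_le_one, integral_Ioc_eq_integral_Ioo,
    setIntegral_congr_fun measurableSet_Ioo hsum_eq, ← integral_Ioc_eq_integral_Ioo,
    ← swap]
  exact tsum_congr hval

theorem stmt_1 :
    ∫ θ in (0:ℝ)..(π/2), θ / Real.sin θ =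
      2 * ∑' n : ℕ, (-1:ℝ)^n / (2*(n:ℝ)+1)^2 := by
  rw [step1, intervalIntegral.integral_const_mul, step2]
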